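/- Let ℓ ≥ 1, let G ⊆ (𝔽q[t])^ℓ be an 𝔽q[t]-submodule, and let N ≥ 0. Suppose x₁, …, x_s ∈ G satisfy deg_t(x_i) ≤ N for all i and the 𝔽q[t]-span of x₁, …, x_s has the same rank as G (equivalently, the quotient of G by this span is a torsion 𝔽q[t]-module). Then G admits an 𝔽q[t]-basis m₁, …, m_ν with deg_t(m_j) ≤ N for every j. -/

import Mathlib

open Polynomial

/-- Swap/reduction step: given a linearly independent family `b` in `G` with
coordinate degrees `≤ N`, and `v ∈ G` not in the span of `b` but with `c • v`
in the span for some `c ≠ 0`, we can produce a new independent family in `G`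
with coordinate degrees `≤ N` and strictly smaller total degree. -/
lemma swap_step {Fq : Type*} [Field Fq] {ℓ N ν : ℕ}
    {G : Submodule (Polynomial Fq) (Fin ℓ → Polynomial Fq)}
    {b : Fin ν → (Fin ℓ → Polynomial Fq)}
    (hbG : ∀ j, b j ∈ G) (hbdeg : ∀ j k, (b j k).natDegree ≤ N)
    (hbli : LinearIndependent (Polynomial Fq) b)
    {v : Fin ℓ → Polynomial Fq} (hvG : v ∈ G)
    (hv : v ∉ Submodule.span (Polynomial Fq) (Set.range b))
    {c : Polynomial Fq} (hc : c ≠ 0)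
    (hcv : c • v ∈ Submodule.span (Polynomial Fq) (Set.range b)) :
    ∃ b' : Fin ν → (Fin ℓ → Polynomial Fq),
      (∀ j, b' j ∈ G) ∧ (∀ j k, (b' j k).natDegree ≤ N) ∧
      LinearIndependent (Polynomial Fq) b' ∧
      (∑ j, Finset.univ.sup fun k => (b' j k).natDegree) <
        ∑ j, Finset.univ.sup fun k => (b j k).natDegree := by
  classical
  -- replace c by a monic polynomial
  obtain ⟨c, hmon, hcv⟩ : ∃ c : Polynomial Fq, c.Monic ∧
      c • v ∈ Submodule.span (Polynomial Fq) (Set.range b) := by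
    refine ⟨c * Polynomial.C c.leadingCoeff⁻¹, Polynomial.monic_mul_leadingCoeff_inv hc, ?_⟩
    rw [mul_comm, ← smul_smul]
    exact Submodule.smul_mem _ _ hcv
  have hc0 : c ≠ 0 := hmon.ne_zero
  have hcdeg : 1 ≤ c.natDegree := by
    rcases Nat.eq_zero_or_pos c.natDegree with h | h
    · exfalso
      have hc1 : c = 1 := hmon.natDegree_eq_zero.mp h
      rw [hc1, one_smul] at hcv
      exact hv hcv
    · exact h
  obtain ⟨a, ha⟩ := (Submodule.mem_span_range_iff_exists_fun _).mp hcv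
  set q : Fin ν → Polynomial Fq := fun j => a j /ₘ c with hq
  set r : Fin ν → Polynomial Fq := fun j => a j %ₘ c with hr
  have har : ∀ j, r j + c * q j = a j := fun j => Polynomial.modByMonic_add_div (a j) c
  set v' : Fin ℓ → Polynomial Fq := v - ∑ j, q j • b j with hv'def
  have hcv' : c • v' = ∑ j, r j • b j := by
    rw [hv'def, smul_sub, Finset.smul_sum, ← ha, ← Finset.sum_sub_distrib]
    refine Finset.sum_congr rfl fun j _ => ?_
    rw [smul_smul, ← sub_smul]
    congr 1
    rw [← har j]; ring
  have hv's : v' ∉ Submodule.span (Polynomial Fq) (Set.range b) := by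
    intro h
    apply hv
    have hmem : ∑ j, q j • b j ∈ Submodule.span (Polynomial Fq) (Set.range b) :=
      Submodule.sum_mem _ fun j _ => Submodule.smul_mem _ _ (Submodule.subset_span ⟨j, rfl⟩)
    have := Submodule.add_mem _ h hmem
    simpa [hv'def] using this
  have hv'0 : v' ≠ 0 := fun h => hv's (h ▸ Submodule.zero_mem _)
  have hv'G : v' ∈ G := Submodule.sub_mem _ hvG
    (Submodule.sum_mem _ fun j _ => Submodule.smul_mem _ _ (hbG j))
  have hrne : ∃ j, r j ≠ 0 := by
    by_contra h
    push_neg at h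
    have hz : c • v' = 0 := by rw [hcv']; simp [h]
    apply hv'0
    funext k
    have hk : c * v' k = 0 := congrFun hz k
    simpa using (mul_eq_zero.mp hk).resolve_left hc0
  obtain ⟨j₀, hj₀mem, hj₀max⟩ := Finset.exists_max_image
      (Finset.univ.filter fun j => r j ≠ 0)
      (fun j => Finset.univ.sup fun k => (b j k).natDegree)
      (by obtain ⟨j, hj⟩ := hrne; exact ⟨j, by simp [hj]⟩)
  set D : ℕ := Finset.univ.sup fun k => (b j₀ k).natDegree with hD
  have hrj₀ : r j₀ ≠ 0 := by simpa using (Finset.mem_filter.mp hj₀mem).2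
  have hDN : D ≤ N := Finset.sup_le fun k _ => hbdeg j₀ k
  -- coordinatewise degree bound
  have hbound : ∀ k, (c * v' k).natDegree ≤ (c.natDegree - 1) + D := by
    intro k
    have hk : c * v' k = ∑ j, r j * b j k := by
      have := congrFun hcv' k
      simpa using this
    rw [hk]
    apply Polynomial.natDegree_sum_le_of_forall_le
    intro j _
    by_cases hj : r j = 0
    · simp [hj]
    · calc (r j * b j k).natDegree ≤ (r j).natDegree + (b j k).natDegree :=
            Polynomial.natDegree_mul_le
        _ ≤ (c.natDegree - 1) + D := by
            have h1 : (r j).natDegree < c.natDegree :=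
              Polynomial.natDegree_lt_natDegree hj (Polynomial.degree_modByMonic_lt _ hmon)
            have h2 : (b j k).natDegree ≤ D := by
              have := hj₀max j (by simp [hj])
              exact le_trans (Finset.le_sup (f := fun k => (b j k).natDegree)
                (Finset.mem_univ k)) this
            omega
  obtain ⟨k₁, hk₁⟩ : ∃ k, v' k ≠ 0 := Function.ne_iff.mp hv'0
  have hD1 : ∀ k, v' k ≠ 0 → (v' k).natDegree < D := by
    intro k hk
    have hmul : (c * v' k).natDegree = c.natDegree + (v' k).natDegree :=
      Polynomial.natDegree_mul hc0 hk
    have := hbound k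
    omega
  have hDpos : 1 ≤ D := by have := hD1 k₁ hk₁; omega
  have hv'deg : ∀ k, (v' k).natDegree < D := by
    intro k
    by_cases hk : v' k = 0
    · simp only [hk, Polynomial.natDegree_zero]; omega
    · exact hD1 k hk
  have hv'sup : (Finset.univ.sup fun k => (v' k).natDegree) < D :=
    (Finset.sup_lt_iff (by simpa using Nat.lt_of_lt_of_le Nat.zero_lt_one hDpos)).mpr fun k _ => hv'deg k
  refine ⟨Function.update b j₀ v', ?_, ?_, ?_, ?_⟩
  · intro j
    rcases eq_or_ne j j₀ with h | h
    · subst h; simpa using hv'G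
    · simpa [Function.update_of_ne h] using hbG j
  · intro j k
    rcases eq_or_ne j j₀ with h | h
    · subst h
      simp only [Function.update_self]
      exact le_trans (le_of_lt (hv'deg k)) hDN
    · simpa [Function.update_of_ne h] using hbdeg j k
  · rw [Fintype.linearIndependent_iff]
    intro g hg
    have hg' : ∑ j, (c * g j) • Function.update b j₀ v' j = 0 := by
      calc ∑ j, (c * g j) • Function.update b j₀ v' j
          = c • ∑ j, g j • Function.update b j₀ v' j := by
            rw [Finset.smul_sum]
            exact Finset.sum_congr rfl fun j _ => (smul_smul c (g j) _).symm
        _ = 0 := by rw [hg, smul_zero]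
    have hsplit : ∑ j, (c * g j) • Function.update b j₀ v' j
        = (∑ j, (if j = j₀ then 0 else c * g j) • b j) + ∑ j, (g j₀ * r j) • b j := by
      have e1 : ∀ j ∈ Finset.univ, (c * g j) • Function.update b j₀ v' j
          = (if j = j₀ then (0 : Polynomial Fq) else c * g j) • b j
            + (if j = j₀ then g j₀ • (c • v') else 0) := by
        intro j _
        rcases eq_or_ne j j₀ with h | h
        · subst h
          simp [smul_smul, mul_comm c (g j)]
        · simp [Function.update_of_ne h, h]
      rw [Finset.sum_congr rfl e1, Finset.sum_add_distrib]
      congr 1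
      rw [Finset.sum_ite_eq' Finset.univ j₀ (fun _ => g j₀ • (c • v'))]
      simp [hcv', Finset.smul_sum, smul_smul]
    have hcomb : ∑ j, ((if j = j₀ then 0 else c * g j) + g j₀ * r j) • b j = 0 := by
      have e2 : ∀ j ∈ Finset.univ, ((if j = j₀ then 0 else c * g j) + g j₀ * r j) • b j
          = (if j = j₀ then 0 else c * g j) • b j + (g j₀ * r j) • b j :=
        fun j _ => add_smul _ _ _
      rw [Finset.sum_congr rfl e2, Finset.sum_add_distrib, ← hsplit, hg']
    have hzero := Fintype.linearIndependent_iff.mp hbli _ hcomb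
    have hgj₀ : g j₀ = 0 := by
      have h0 := hzero j₀
      simp only [eq_self_iff_true, if_true, zero_add] at h0
      exact (mul_eq_zero.mp h0).resolve_right hrj₀
    intro j
    rcases eq_or_ne j j₀ with h | h
    · rw [h]; exact hgj₀
    · have h0 := hzero j
      simp only [if_neg h, hgj₀, zero_mul, add_zero] at h0
      exact (mul_eq_zero.mp h0).resolve_left hc0
  · have heq : (fun j => Finset.univ.sup fun k => (Function.update b j₀ v' j k).natDegree)
        = Function.update (fun j => Finset.univ.sup fun k => (b j k).natDegree) j₀
            (Finset.univ.sup fun k => (v' k).natDegree) := by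
      funext j
      rcases eq_or_ne j j₀ with h | h
      · subst h; simp
      · simp [Function.update_of_ne h]
    calc (∑ j, Finset.univ.sup fun k => (Function.update b j₀ v' j k).natDegree)
        = ∑ j, Function.update (fun j => Finset.univ.sup fun k => (b j k).natDegree) j₀
            (Finset.univ.sup fun k => (v' k).natDegree) j :=
          Finset.sum_congr rfl fun j _ => congrFun heq j
      _ = (Finset.univ.sup fun k => (v' k).natDegree)
            + ∑ j ∈ Finset.univ \ {j₀}, (Finset.univ.sup fun k => (b j k).natDegree) :=
          Finset.sum_update_of_mem (Finset.mem_univ j₀) _ _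
      _ < D + ∑ j ∈ Finset.univ \ {j₀}, (Finset.univ.sup fun k => (b j k).natDegree) := by
          omega
      _ = ∑ j, Finset.univ.sup fun k => (b j k).natDegree := by
          rw [hD]
          exact (Finset.sum_eq_add_sum_sdiff_singleton_of_mem (Finset.mem_univ j₀)
            fun j => Finset.univ.sup fun k => (b j k).natDegree).symm

/-- The lattice-theoretic step of Section 3.3 of the paper. Let
`G ⊆ (𝔽q[t])^ℓ` be an `𝔽q[t]`-submodule and suppose `x₁, …, x_s ∈ G` have
degree at most `N` and span a submodule of full rank in `G` (i.e. the quotient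
of `G` by their span is a torsion `𝔽q[t]`-module). Then `G` admits an
`𝔽q[t]`-basis all of whose elements have degree at most `N`. -/
theorem bounded_degree_basis_of_full_rank_family
    (Fq : Type*) [Field Fq] [Fintype Fq]
    (ℓ : ℕ) (hℓ : 1 ≤ ℓ)
    (G : Submodule (Polynomial Fq) (Fin ℓ → Polynomial Fq))
    (N : ℕ)
    (s : ℕ) (x : Fin s → (Fin ℓ → Polynomial Fq))
    (hxG : ∀ i, x i ∈ G)
    (hdeg : ∀ i c, (x i c).natDegree ≤ N)
    (htor : ∀ y ∈ G, ∃ c : Polynomial Fq, c ≠ 0 ∧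
      c • y ∈ Submodule.span (Polynomial Fq) (Set.range x)) :
    ∃ (ν : ℕ) (mb : Module.Basis (Fin ν) (Polynomial Fq) G),
      ∀ j c, (((mb j : Fin ℓ → Polynomial Fq)) c).natDegree ≤ N := by
  classical
  set P : ℕ → Prop := fun n => ∃ b : Fin n → (Fin ℓ → Polynomial Fq),
    (∀ j, b j ∈ G) ∧ (∀ j k, (b j k).natDegree ≤ N) ∧
      LinearIndependent (Polynomial Fq) b with hPdef
  have hcard : ∀ n (b : Fin n → (Fin ℓ → Polynomial Fq)),
      LinearIndependent (Polynomial Fq) b → n ≤ ℓ := by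
    intro n b hb
    have := hb.fintype_card_le_finrank
    simpa using this
  have hP0 : P 0 :=
    ⟨fun j => j.elim0, fun j => j.elim0, fun j => j.elim0, linearIndependent_empty_type⟩
  set ν : ℕ := Nat.findGreatest P ℓ with hν
  have hPν : P ν := Nat.findGreatest_spec (Nat.zero_le ℓ) hP0
  have hνmax : ∀ n, P n → n ≤ ν := fun n hn =>
    Nat.le_findGreatest (hcard n hn.choose hn.choose_spec.2.2) hn
  -- choose a family of minimal sum of degrees
  have hQex : ∃ d, ∃ b : Fin ν → (Fin ℓ → Polynomial Fq),
      ((∀ j, b j ∈ G) ∧ (∀ j k, (b j k).natDegree ≤ N) ∧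
        LinearIndependent (Polynomial Fq) b) ∧
      (∑ j, Finset.univ.sup fun k => (b j k).natDegree) = d :=
    ⟨_, hPν.choose, hPν.choose_spec, rfl⟩
  obtain ⟨b, ⟨hbG, hbdeg, hbli⟩, hbsum⟩ := Nat.find_spec hQex
  have hstep : ∀ v ∈ G, ∀ cc : Polynomial Fq, cc ≠ 0 →
      cc • v ∈ Submodule.span (Polynomial Fq) (Set.range b) →
      v ∈ Submodule.span (Polynomial Fq) (Set.range b) := by
    intro v hvG cc hcc hccv
    by_contra hv
    obtain ⟨b', hb'G, hb'deg, hb'li, hb'lt⟩ := swap_step hbG hbdeg hbli hvG hv hcc hccv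
    have hle : Nat.find hQex ≤ ∑ j, Finset.univ.sup fun k => (b' j k).natDegree :=
      Nat.find_min' hQex ⟨b', ⟨hb'G, hb'deg, hb'li⟩, rfl⟩
    omega
  have hx : ∀ i, x i ∈ Submodule.span (Polynomial Fq) (Set.range b) := by
    intro i
    by_contra hxi
    have hndep : ¬ LinearIndependent (Polynomial Fq)
        (Fin.cons (x i) b : Fin (ν + 1) → (Fin ℓ → Polynomial Fq)) := by
      intro hli
      have h1 : ν + 1 ≤ ν := by
        refine hνmax (ν + 1) ⟨Fin.cons (x i) b, ?_, ?_, hli⟩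
        · intro j
          refine Fin.cases ?_ ?_ j
          · simpa using hxG i
          · intro j'; simpa using hbG j'
        · intro j k
          refine Fin.cases ?_ ?_ j
          · simpa using hdeg i k
          · intro j'; simpa using hbdeg j' k
      omega
    rw [Fintype.linearIndependent_iff] at hndep
    push_neg at hndep
    obtain ⟨g, hgsum, j, hgj⟩ := hndep
    rw [Fin.sum_univ_succ] at hgsum
    simp only [Fin.cons_zero, Fin.cons_succ] at hgsum
    have hg0 : g 0 ≠ 0 := by
      intro h0
      rw [h0, zero_smul, zero_add] at hgsum
      have hall := Fintype.linearIndependent_iff.mp hbli _ hgsum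
      rcases Fin.eq_zero_or_eq_succ j with h | ⟨j', rfl⟩
      · exact hgj (h ▸ h0)
      · exact hgj (hall j')
    have hmem : g 0 • x i ∈ Submodule.span (Polynomial Fq) (Set.range b) := by
      have he : g 0 • x i = -∑ j', g j'.succ • b j' := eq_neg_of_add_eq_zero_left hgsum
      rw [he]
      exact Submodule.neg_mem _ (Submodule.sum_mem _
        fun j' _ => Submodule.smul_mem _ _ (Submodule.subset_span ⟨j', rfl⟩))
    exact hxi (hstep (x i) (hxG i) (g 0) hg0 hmem)
  have hGspan : ∀ y ∈ G, y ∈ Submodule.span (Polynomial Fq) (Set.range b) := by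
    intro y hy
    obtain ⟨cc, hcc, hccmem⟩ := htor y hy
    refine hstep y hy cc hcc ?_
    refine Submodule.span_le.mpr ?_ hccmem
    rintro _ ⟨i, rfl⟩
    exact hx i
  set bG : Fin ν → G := fun j => ⟨b j, hbG j⟩ with hbGdef
  have hbGli : LinearIndependent (Polynomial Fq) bG :=
    LinearIndependent.of_comp G.subtype hbli
  have hbGspan : ⊤ ≤ Submodule.span (Polynomial Fq) (Set.range bG) := by
    rintro ⟨y, hy⟩ -
    obtain ⟨f, hf⟩ := (Submodule.mem_span_range_iff_exists_fun _).mp (hGspan y hy)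
    rw [Submodule.mem_span_range_iff_exists_fun]
    refine ⟨f, ?_⟩
    apply Subtype.ext
    have : ((∑ j, f j • bG j : G) : Fin ℓ → Polynomial Fq) = ∑ j, f j • b j := by
      simp [hbGdef]
    rw [this, hf]
  refine ⟨ν, Module.Basis.mk hbGli hbGspan, ?_⟩
  intro j k
  have : ((Module.Basis.mk hbGli hbGspan j : G) : Fin ℓ → Polynomial Fq) = b j := by
    rw [Module.Basis.mk_apply]
  rw [this]
  exact hbdeg j k
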